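/- If t ≥ 2g − 1, then the set Ψ(t) is finite and has cardinality #Ψ(t) = 1 − g + t. -/

import Mathlib

lemma sum_Ico_id_int (N : ℕ) : (∑ r ∈ Finset.Ico (0:ℤ) (N:ℤ), r) * 2 = (N:ℤ) * ((N:ℤ) - 1) := by
  induction N with
  | zero => simp
  | succ k ih =>
    have hins : Finset.Ico (0:ℤ) ((k:ℤ)+1) = insert (k:ℤ) (Finset.Ico (0:ℤ) (k:ℤ)) := by
      ext x; simp [Finset.mem_Ico, Finset.mem_insert]
    have hc : ((k+1 : ℕ) : ℤ) = (k:ℤ) + 1 := by push_cast; ring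
    rw [hc, hins, Finset.sum_insert (by simp), add_mul, ih]
    ring

lemma Icc_eq_Ico_int (N : ℤ) : Finset.Icc (0:ℤ) N = Finset.Ico (0:ℤ) (N+1) := by
  ext x; simp [Finset.mem_Icc, Finset.mem_Ico, Int.lt_add_one_iff]

/-- The lattice point set `Ψ(t) = {(a,b,c) ∈ ℤ³ : 0 ≤ a < m, 0 ≤ b ≤ q, c ≥ 0,
q³ a + m q b + m(q+1) c ≤ t}`. -/
def PsiSet (q : ℕ) (m t : ℤ) : Set (ℤ × ℤ × ℤ) :=
  {p | 0 ≤ p.1 ∧ p.1 < m ∧ 0 ≤ p.2.1 ∧ p.2.1 ≤ (q : ℤ) ∧ 0 ≤ p.2.2 ∧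
    (q : ℤ) ^ 3 * p.1 + m * (q : ℤ) * p.2.1 + m * ((q : ℤ) + 1) * p.2.2 ≤ t}

/-- If `t ≥ 2g - 1`, then `Ψ(t)` is finite and `#Ψ(t) = 1 - g + t`. -/
theorem card_PsiSet (q n : ℕ) (hq : IsPrimePow q) (hn : Odd n) (hn1 : 1 < n)
    (m g : ℤ) (hm : m * ((q : ℤ) + 1) = (q : ℤ) ^ n + 1)
    (hg : 2 * g = ((q : ℤ) - 1) * ((q : ℤ) ^ (n + 1) + (q : ℤ) ^ n - (q : ℤ) ^ 2))
    (t : ℤ) (ht : 2 * g - 1 ≤ t) :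
    (PsiSet q m t).Finite ∧ ((PsiSet q m t).ncard : ℤ) = 1 - g + t := by
  obtain ⟨n', rfl⟩ : ∃ n', n = n' + 1 := ⟨n - 1, by omega⟩
  have hq2 : (2:ℤ) ≤ (q:ℤ) := by exact_mod_cast hq.two_le
  have hq0 : (0:ℤ) < (q:ℤ) := by linarith
  have hQpos : (0:ℤ) < (q:ℤ) ^ (n'+1) := pow_pos hq0 _
  have hmpos : 0 < m := by nlinarith
  have hm0 : m ≠ 0 := ne_of_gt hmpos
  set D : ℤ := m * ((q:ℤ) + 1) with hD
  -- now hm : D = q^(n'+1)+1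
  have hm' : m * ((q:ℤ) + 1) = (q:ℤ)^(n'+1) + 1 := hD.symm.trans hm
  have hDpos : 0 < D := by rw [hD]; positivity
  have hcop : IsCoprime (q:ℤ) m := ⟨m - (q:ℤ)^n', 1, by linear_combination hm'⟩
  have hcopq1 : IsCoprime ((q:ℤ)+1) (q:ℤ) := ⟨1, -1, by ring⟩
  set v : ℤ × ℤ → ℤ := fun p => (q:ℤ)^3 * p.1 + m * (q:ℤ) * p.2 with hv
  set B : Finset (ℤ × ℤ) := Finset.Ico (0:ℤ) m ×ˢ Finset.Icc (0:ℤ) (q:ℤ) with hB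
  have key : ∀ p ∈ B, ∀ p' ∈ B, D ∣ v p - v p' → p = p' := by
    rintro ⟨a, b⟩ hp ⟨a', b'⟩ hp' hdvd
    simp only [hB, Finset.mem_product, Finset.mem_Ico, Finset.mem_Icc] at hp hp'
    have hmD : m ∣ D := ⟨(q:ℤ)+1, rfl⟩
    have h1 : m ∣ (a - a') * (q:ℤ)^3 := by
      have h2 : m ∣ v (a,b) - v (a',b') := hmD.trans hdvd
      have h3 : m ∣ m * (q:ℤ) * (b - b') := ⟨(q:ℤ) * (b - b'), by ring⟩
      have h4 : v (a,b) - v (a',b') - m * (q:ℤ) * (b - b') = (a - a') * (q:ℤ)^3 := by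
        simp only [hv]; ring
      exact h4 ▸ dvd_sub h2 h3
    have ha : a = a' := by
      have hdvd_a : m ∣ a - a' := (hcop.pow_left.symm).dvd_of_dvd_mul_right h1
      have : a - a' = 0 := Int.eq_zero_of_abs_lt_dvd hdvd_a (by
        rw [abs_lt]; constructor <;> omega)
      omega
    subst ha
    have h4 : D ∣ m * ((q:ℤ) * (b - b')) := by
      have h5 : v (a,b) - v (a,b') = m * ((q:ℤ) * (b - b')) := by simp only [hv]; ring
      exact h5 ▸ hdvd
    have h6 : ((q:ℤ)+1) ∣ (b - b') :=
      hcopq1.dvd_of_dvd_mul_left ((mul_dvd_mul_iff_left hm0).mp (hD ▸ h4))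
    have hb : b = b' := by
      have : b - b' = 0 := Int.eq_zero_of_abs_lt_dvd h6 (by rw [abs_lt]; constructor <;> omega)
      omega
    subst hb; rfl
  set cdiv : ℤ × ℤ → ℤ := fun p => (t - v p) / D with hcdiv
  set F : Finset (ℤ × ℤ × ℤ) :=
      B.biUnion (fun p => (Finset.Icc (0:ℤ) (cdiv p)).image (fun c => (p.1, p.2, c))) with hF
  have hmemF : ∀ x : ℤ × ℤ × ℤ, x ∈ F ↔ x ∈ PsiSet q m t := by
    rintro ⟨a, b, c⟩
    simp only [hF, Finset.mem_biUnion, Finset.mem_image, Finset.mem_Icc, hB,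
      Finset.mem_product, Finset.mem_Ico, PsiSet, Set.mem_setOf_eq, Prod.exists]
    constructor
    · rintro ⟨a0, b0, ⟨⟨ha0, ha1⟩, hb0, hb1⟩, c0, ⟨hc0, hc1⟩, heq⟩
      obtain ⟨ha, hb, hc⟩ : a0 = a ∧ b0 = b ∧ c0 = c := by
        simpa [Prod.ext_iff] using heq
      subst ha hb hc
      refine ⟨ha0, ha1, hb0, hb1, hc0, ?_⟩
      have h7 := (Int.le_ediv_iff_mul_le hDpos).mp hc1
      simp only [hv] at h7
      have h8 : m * ((q:ℤ)+1) * c0 = c0 * D := by rw [hD]; ring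
      linarith [h7, h8]
    · rintro ⟨ha0, ha1, hb0, hb1, hc0, hle⟩
      refine ⟨a, b, ⟨⟨ha0, ha1⟩, hb0, hb1⟩, c, ⟨hc0, ?_⟩, rfl⟩
      rw [hcdiv]
      apply (Int.le_ediv_iff_mul_le hDpos).mpr
      have h8 : c * D = m * ((q:ℤ)+1) * c := by rw [hD]; ring
      simp only [hv]
      rw [h8]
      linarith
  have hFset : (F : Set (ℤ × ℤ × ℤ)) = PsiSet q m t := by
    ext x; simpa using hmemF x
  have hfin : (PsiSet q m t).Finite := hFset ▸ F.finite_toSet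
  refine ⟨hfin, ?_⟩
  have hncard : ((PsiSet q m t).ncard : ℤ) = (F.card : ℤ) := by
    rw [← hFset, Set.ncard_coe_finset]
  rw [hncard]
  have hvmax : ∀ p ∈ B, v p ≤ t + D := by
    rintro ⟨a, b⟩ hp
    simp only [hB, Finset.mem_product, Finset.mem_Ico, Finset.mem_Icc] at hp
    have h1 : (q:ℤ)^3 * a ≤ (q:ℤ)^3 * (m - 1) :=
      mul_le_mul_of_nonneg_left (by omega) (by positivity)
    have h2 : m * (q:ℤ) * b ≤ m * (q:ℤ) * (q:ℤ) :=
      mul_le_mul_of_nonneg_left hp.2.2 (by positivity)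
    have hmaxval : (q:ℤ)^3 * (m - 1) + m * (q:ℤ) * (q:ℤ) = 2 * g + (q:ℤ)^(n'+1) := by
      linear_combination ((q:ℤ)^2) * hm' - hg
    have h3 : v (a, b) ≤ 2 * g + (q:ℤ)^(n'+1) := by
      simp only [hv]; linarith
    linarith [hm]
  have hnn : ∀ p ∈ B, 0 ≤ cdiv p + 1 := by
    intro p hp
    have h1 : (-1 : ℤ) ≤ cdiv p := by
      rw [hcdiv]
      exact (Int.le_ediv_iff_mul_le hDpos).mpr (by linarith [hvmax p hp])
    linarith
  have hdisj : (B : Set (ℤ × ℤ)).PairwiseDisjoint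
      (fun p => (Finset.Icc (0:ℤ) (cdiv p)).image (fun c => (p.1, p.2, c))) := by
    rintro p hp p' hp' hne
    simp only [Function.onFun, Finset.disjoint_left]
    rintro x hx hx'
    simp only [Finset.mem_image, Finset.mem_Icc] at hx hx'
    obtain ⟨c, _, rfl⟩ := hx
    obtain ⟨c', _, h⟩ := hx'
    apply hne
    have h1 : p.1 = p'.1 := (congrArg Prod.fst h).symm
    have h2 : p.2 = p'.2 := ((congrArg (fun x => x.2.1) h).symm : p.2 = p'.2)
    exact Prod.ext_iff.mpr ⟨h1, h2⟩
  have hcardF : (F.card : ℤ) = ∑ p ∈ B, (cdiv p + 1) := by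
    rw [hF, Finset.card_biUnion (fun p hp p' hp' hne => hdisj hp hp' hne)]
    push_cast
    apply Finset.sum_congr rfl
    intro p hp
    rw [Finset.card_image_of_injective _
        (fun c c' h => (Prod.ext_iff.mp (Prod.ext_iff.mp h).2).2), Int.card_Icc]
    rw [Int.toNat_of_nonneg (by simpa using hnn p hp)]
    ring
  have hcard_b : ((Finset.Icc (0:ℤ) (q:ℤ)).card : ℤ) = (q:ℤ) + 1 := by
    rw [Int.card_Icc]
    rw [show (q:ℤ) + 1 - 0 = (q:ℤ) + 1 by ring, Int.toNat_of_nonneg (by positivity)]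
  have hcard_a : ((Finset.Ico (0:ℤ) m).card : ℤ) = m := by
    rw [Int.card_Ico, sub_zero, Int.toNat_of_nonneg hmpos.le]
  have hcardB : (B.card : ℤ) = D := by
    rw [hB, Finset.card_product, Nat.cast_mul, hcard_a, hcard_b, hD]
  set w : ℤ × ℤ → ℤ := fun p => (t - v p) % D with hw
  have hinj : ∀ p ∈ B, ∀ p' ∈ B, w p = w p' → p = p' := by
    intro p hp p' hp' hww
    apply key p hp p' hp'
    have hmod : (t - v p) ≡ (t - v p') [ZMOD D] := by
      simpa [Int.ModEq, hw] using hww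
    have h2 : (t - v p') - (t - v p) = v p - v p' := by ring
    exact h2 ▸ hmod.dvd
  have himg : B.image w = Finset.Ico (0:ℤ) D := by
    apply Finset.eq_of_subset_of_card_le
    · intro r hr
      simp only [Finset.mem_image] at hr
      obtain ⟨p, hp, rfl⟩ := hr
      simp only [hw, Finset.mem_Ico]
      exact ⟨Int.emod_nonneg _ (ne_of_gt hDpos), Int.emod_lt_of_pos _ hDpos⟩
    · rw [Finset.card_image_of_injOn (fun p hp p' hp' => hinj p hp p' hp')]
      apply Nat.le_of_eq
      have h1 : ((Finset.Ico (0:ℤ) D).card : ℤ) = (B.card : ℤ) := by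
        rw [Int.card_Ico, sub_zero, Int.toNat_of_nonneg hDpos.le, hcardB]
      exact_mod_cast h1
  have hmodsum : ∑ p ∈ B, w p = ∑ r ∈ Finset.Ico (0:ℤ) D, r := by
    rw [← himg, Finset.sum_image (fun p hp p' hp' => hinj p hp p' hp')]
  have hGauss : (∑ r ∈ Finset.Ico (0:ℤ) D, r) * 2 = D * (D - 1) := by
    have hDnat : ((D.toNat : ℕ) : ℤ) = D := Int.toNat_of_nonneg hDpos.le
    rw [← hDnat, sum_Ico_id_int]
  have hSa : (∑ a ∈ Finset.Ico (0:ℤ) m, a) * 2 = m * (m - 1) := by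
    have hmnat : ((m.toNat : ℕ) : ℤ) = m := Int.toNat_of_nonneg hmpos.le
    rw [← hmnat, sum_Ico_id_int]
  have hSb : (∑ b ∈ Finset.Icc (0:ℤ) (q:ℤ), b) * 2 = ((q:ℤ) + 1) * (q:ℤ) := by
    rw [Icc_eq_Ico_int]
    rw [show (q:ℤ) + 1 = ((q + 1 : ℕ) : ℤ) by push_cast; ring, sum_Ico_id_int]
    push_cast; ring
  have hSv : (∑ p ∈ B, v p) * 2
      = ((q:ℤ)+1) * (q:ℤ)^3 * (m * (m-1)) + m * ((m * (q:ℤ)) * (((q:ℤ)+1) * (q:ℤ))) := by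
    rw [hB, Finset.sum_product]
    simp only [hv]
    have hinner : ∀ a : ℤ, (∑ b ∈ Finset.Icc (0:ℤ) (q:ℤ), ((q:ℤ)^3 * a + m * (q:ℤ) * b))
        = ((q:ℤ)+1) * ((q:ℤ)^3) * a + m * (q:ℤ) * (∑ b ∈ Finset.Icc (0:ℤ) (q:ℤ), b) := by
      intro a
      rw [Finset.sum_add_distrib, Finset.sum_const, ← Finset.mul_sum, nsmul_eq_mul, hcard_b]
      ring
    rw [Finset.sum_congr rfl (fun a _ => hinner a)]
    rw [Finset.sum_add_distrib, Finset.sum_const, ← Finset.mul_sum, nsmul_eq_mul, hcard_a]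
    linear_combination (((q:ℤ)+1) * (q:ℤ)^3) * hSa + (m * (m * (q:ℤ))) * hSb
  have hP : (∑ p ∈ B, v p) * 2 = D * (D - 1) + 2 * g * D := by
    rw [hSv]
    linear_combination (D + m*((q:ℤ)+1) - 1 + 2*g) * hD + (m*((q:ℤ)+1)*((q:ℤ)^2-1)) * hm'
      - (m*((q:ℤ)+1)) * hg
  have hdivmod : ∀ p ∈ B, D * cdiv p = (t - v p) - w p := by
    intro p _
    simp only [hcdiv, hw]
    linarith [Int.mul_ediv_add_emod (t - v p) D]
  have hsum1 : D * (∑ p ∈ B, cdiv p) = (D * t - ∑ p ∈ B, v p) - ∑ p ∈ B, w p := by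
    rw [Finset.mul_sum, Finset.sum_congr rfl hdivmod, Finset.sum_sub_distrib,
      Finset.sum_sub_distrib, Finset.sum_const, nsmul_eq_mul, hcardB]
  have hsum2 : (F.card : ℤ) = (∑ p ∈ B, cdiv p) + D := by
    rw [hcardF, Finset.sum_add_distrib, Finset.sum_const, nsmul_eq_mul, hcardB]
    ring
  rw [hmodsum] at hsum1
  apply mul_left_cancel₀ (show (2*D : ℤ) ≠ 0 by positivity)
  linear_combination 2*D*hsum2 + 2*hsum1 - hGauss - hP
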